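/- arXiv:2412.02174 — 4 statements merged into one kernel-verified Lean document; each statement's English description precedes it below -/
import Mathlib

section
/- Let A, B, C be three points in the plane with B not on line AC, and let B₁ be the orthogonal projection of B onto line AC. If B₁ lies between A and C (inclusive), then the reflections of B across the midpoint X of segment AB and across the midpoint Y of segment BC, together with A and C, form a rectangle with base AC whose area equals the area of triangle ABC. -/
open EuclideanGeometry MeasureTheory Pointwise

noncomputable section

abbrev Plane := EuclideanSpace ℝ (Fin 2)

def ee0 : Plane := EuclideanSpace.single 0 1
def ee1 : Plane := EuclideanSpace.single 1 1

lemma decomp (x : Plane) : x = x 0 • ee0 + x 1 • ee1 := by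
  ext i
  fin_cases i <;> simp [ee0, ee1, EuclideanSpace.single_apply]

def Sq : Set Plane := {x | (0 ≤ x 0 ∧ x 0 ≤ 1) ∧ (0 ≤ x 1 ∧ x 1 ≤ 1)}
def Tri : Set Plane := {x | 0 ≤ x 0 ∧ 0 ≤ x 1 ∧ x 0 + x 1 ≤ 1}

lemma convex_Sq : Convex ℝ Sq := by
  intro x hx y hy a b ha hb hab
  obtain ⟨⟨h1,h2⟩,h3,h4⟩ := hx; obtain ⟨⟨g1,g2⟩,g3,g4⟩ := hy
  constructor <;> constructor <;>
    simp only [PiLp.add_apply, PiLp.smul_apply, smul_eq_mul] <;> nlinarith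

lemma convex_Tri : Convex ℝ Tri := by
  intro x hx y hy a b ha hb hab
  obtain ⟨h1,h2,h3⟩ := hx; obtain ⟨g1,g2,g3⟩ := hy
  refine ⟨?_, ?_, ?_⟩ <;>
    simp only [PiLp.add_apply, PiLp.smul_apply, smul_eq_mul] <;> nlinarith

lemma hull_sq : convexHull ℝ ({0, ee0, ee1, ee0 + ee1} : Set Plane) = Sq := by
  apply le_antisymm
  · apply convexHull_min _ convex_Sq
    intro p hp
    simp only [Set.mem_insert_iff, Set.mem_singleton_iff] at hp
    rcases hp with h|h|h|h <;> subst h <;>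
      simp [Sq, ee0, ee1, EuclideanSpace.single_apply] <;> norm_num
  · intro x hx
    obtain ⟨⟨h1,h2⟩,h3,h4⟩ := hx
    have hy0 : x 0 • ee0 ∈ segment ℝ (0:Plane) ee0 :=
      ⟨1 - x 0, x 0, by linarith, h1, by ring, by simp⟩
    have hy1 : x 0 • ee0 + ee1 ∈ segment ℝ ee1 (ee0 + ee1) := by
      refine ⟨1 - x 0, x 0, by linarith, h1, by ring, ?_⟩
      module
    have hseg : x ∈ segment ℝ (x 0 • ee0) (x 0 • ee0 + ee1) := by
      refine ⟨1 - x 1, x 1, by linarith, h3, by ring, ?_⟩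
      ext i; fin_cases i <;> simp [ee0, ee1, EuclideanSpace.single_apply] <;> ring
    refine (convex_convexHull ℝ _).segment_subset ?_ ?_ hseg
    · exact segment_subset_convexHull (by simp) (by simp) hy0
    · exact segment_subset_convexHull (by simp) (by simp) hy1

lemma hull_tri : convexHull ℝ ({0, ee0, ee1} : Set Plane) = Tri := by
  apply le_antisymm
  · apply convexHull_min _ convex_Tri
    intro p hp
    simp only [Set.mem_insert_iff, Set.mem_singleton_iff] at hp
    rcases hp with h|h|h <;> subst h <;>
      simp [Tri, ee0, ee1, EuclideanSpace.single_apply] <;> norm_num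
  · intro x hx
    obtain ⟨h1,h2,h3⟩ := hx
    rcases eq_or_lt_of_le (add_nonneg h1 h2) with hc | hc
    · have hx0 : x 0 = 0 := by linarith
      have hx1 : x 1 = 0 := by linarith
      have : x = 0 := by
        ext i; fin_cases i <;> simp [hx0, hx1]
      rw [this]; exact subset_convexHull ℝ _ (by simp)
    · set c := x 0 + x 1 with hcdef
      have hm : (x 0 / c) • ee0 + (x 1 / c) • ee1 ∈ segment ℝ ee0 ee1 :=
        ⟨x 0 / c, x 1 / c, by positivity, by positivity, by field_simp; exact hcdef.symm, rfl⟩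
      have hseg : x ∈ segment ℝ (0:Plane) ((x 0 / c) • ee0 + (x 1 / c) • ee1) := by
        refine ⟨1 - c, c, by linarith, hc.le, by ring, ?_⟩
        ext i
        fin_cases i <;> simp [ee0, ee1, EuclideanSpace.single_apply] <;>
          field_simp <;> ring
      refine (convex_convexHull ℝ _).segment_subset ?_ ?_ hseg
      · exact subset_convexHull ℝ _ (by simp)
      · exact segment_subset_convexHull (by simp) (by simp) hm


lemma span_pair_ne_top (p q : Plane) : affineSpan ℝ ({p, q} : Set Plane) ≠ ⊤ := by
  intro h
  have h1 : (affineSpan ℝ ({p, q} : Set Plane)).direction = ⊤ := by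
    rw [h]; exact AffineSubspace.direction_top ℝ _ _
  rw [direction_affineSpan, vectorSpan_pair] at h1
  have h2 : Module.finrank ℝ (Submodule.span ℝ ({p -ᵥ q} : Set Plane)) ≤ 1 := by
    classical
    refine le_trans (finrank_span_le_card _) ?_
    simp
  rw [h1] at h2
  have h3 : Module.finrank ℝ (⊤ : Submodule ℝ Plane) = 2 := by
    rw [finrank_top]; simp
  omega

lemma vol_sq : volume Sq = 1 := by
  have hmp := EuclideanSpace.volume_preserving_symm_measurableEquiv_toLp (Fin 2)
  have : Sq = (MeasurableEquiv.toLp 2 (Fin 2 → ℝ)).symm ⁻¹'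
      (Set.univ.pi fun _ : Fin 2 => Set.Icc (0:ℝ) 1) := by
    ext x
    simp only [Sq, Set.mem_preimage, Set.mem_pi, Set.mem_univ, forall_true_left,
      Set.mem_Icc, Set.mem_setOf_eq]
    constructor
    · rintro ⟨⟨a,b⟩,c,d⟩ i; fin_cases i <;> exact ⟨by assumption, by assumption⟩
    · intro h; exact ⟨h 0, h 1⟩
  rw [this, hmp.measure_preimage (MeasurableSet.univ_pi fun _ => measurableSet_Icc).nullMeasurableSet]
  rw [volume_pi_pi]
  simp [Real.volume_Icc]

def Tri' : Set Plane := {x | x 0 ≤ 1 ∧ x 1 ≤ 1 ∧ 1 ≤ x 0 + x 1}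

lemma measurable_coord (i : Fin 2) : Measurable fun x : Plane => x i := by
  exact (EuclideanSpace.proj i).continuous.measurable

lemma measurableSet_Tri : MeasurableSet Tri := by
  have h0 := measurable_coord 0
  have h1 := measurable_coord 1
  exact (measurableSet_le measurable_const h0).inter
    ((measurableSet_le measurable_const h1).inter
      (measurableSet_le (h0.add h1) measurable_const))

lemma measurableSet_Tri' : MeasurableSet Tri' := by
  have h0 := measurable_coord 0
  have h1 := measurable_coord 1
  exact (measurableSet_le h0 measurable_const).inter
    ((measurableSet_le h1 measurable_const).inter
      (measurableSet_le measurable_const (h0.add h1)))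

lemma vol_tri' : volume Tri' = volume Tri := by
  have himg : Tri' = (ee0 + ee1) +ᵥ ((-(LinearMap.id : Plane →ₗ[ℝ] Plane)) '' Tri) := by
    ext x
    simp only [Tri', Tri, Set.mem_setOf_eq, Set.mem_vadd_set, Set.mem_image]
    constructor
    · intro ⟨h1, h2, h3⟩
      refine ⟨x - (ee0 + ee1), ⟨(ee0+ee1) - x, ⟨?_, ?_, ?_⟩, ?_⟩, ?_⟩ <;>
        first
          | (simp [ee0, ee1, EuclideanSpace.single_apply]; linarith)
          | (ext i; fin_cases i <;> simp [ee0, ee1, EuclideanSpace.single_apply])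
          | (simp <;> abel)
    · rintro ⟨_, ⟨y, ⟨h1, h2, h3⟩, rfl⟩, rfl⟩
      refine ⟨?_, ?_, ?_⟩ <;> simp [ee0, ee1, EuclideanSpace.single_apply] <;> linarith
  rw [himg, measure_vadd, Measure.addHaar_image_linearMap]
  have : LinearMap.det (-(LinearMap.id : Plane →ₗ[ℝ] Plane)) = 1 := by
    rw [show -(LinearMap.id : Plane →ₗ[ℝ] Plane) = (-1 : ℝ) • LinearMap.id by simp,
      LinearMap.det_smul, LinearMap.det_id]
    simp
  rw [this]
  simp

lemma vol_tri : volume Tri = 1/2 := by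
  have hunion : Tri ∪ Tri' = Sq := by
    ext x
    simp only [Tri, Tri', Sq, Set.mem_union, Set.mem_setOf_eq]
    constructor
    · rintro (⟨h1,h2,h3⟩|⟨h1,h2,h3⟩) <;> exact ⟨⟨by linarith, by linarith⟩, by linarith, by linarith⟩
    · rintro ⟨⟨h1,h2⟩,h3,h4⟩
      rcases le_total (x 0 + x 1) 1 with h|h
      · exact Or.inl ⟨h1, h3, h⟩
      · exact Or.inr ⟨h2, h4, h⟩
  have hinter : volume (Tri ∩ Tri') = 0 := by
    have hsub : Tri ∩ Tri' ⊆ (affineSpan ℝ ({ee0, ee1} : Set Plane) : Set Plane) := by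
      rintro x ⟨⟨h1,h2,h3⟩, g1, g2, g3⟩
      have hx : x = (x 1) • (ee1 -ᵥ ee0) +ᵥ ee0 := by
        ext i
        fin_cases i <;> simp [ee0, ee1, EuclideanSpace.single_apply] <;> linarith
      rw [hx]
      exact smul_vsub_vadd_mem_affineSpan_pair _ _ _
    exact measure_mono_null hsub
      (Measure.addHaar_affineSubspace volume _ (span_pair_ne_top _ _))
  have key := measure_union_add_inter (μ := volume) Tri measurableSet_Tri'
  rw [hunion, hinter, vol_sq, add_zero, vol_tri'] at key
  rw [ENNReal.eq_div_iff two_ne_zero ENNReal.ofNat_ne_top, two_mul, ← key]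



lemma repr_toLinearEquiv_apply (x : Plane) (j : Fin 2) :
    (EuclideanSpace.basisFun (Fin 2) ℝ).repr.toLinearEquiv x j = x j := rfl

lemma perp_cancel {v w a : Plane} (c : ℝ) (h : w = v + c • a)
    (hv : inner ℝ v a = (0:ℝ)) (hw : inner ℝ w a = (0:ℝ)) : w = v := by
  have h1 : c * (inner ℝ a a : ℝ) = 0 := by
    rw [h, inner_add_left, hv, real_inner_smul_left] at hw; linarith
  rcases mul_eq_zero.mp h1 with hc | ha
  · rw [h, hc, zero_smul, add_zero]
  · have : a = 0 := inner_self_eq_zero.mp ha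
    rw [h, this, smul_zero, add_zero]

theorem stmt_0 (A B C B₁ A' C' : Plane)
    (hB : B ∉ affineSpan ℝ ({A, C} : Set Plane))
    (hB₁mem : B₁ ∈ affineSpan ℝ ({A, C} : Set Plane))
    (hB₁perp : inner ℝ (B - B₁) (C - A) = (0 : ℝ))
    (hbtw : Wbtw ℝ A B₁ C)
    (hA'mem : A' ∈ affineSpan ℝ ({midpoint ℝ A B, midpoint ℝ B C} : Set Plane))
    (hA'perp : inner ℝ (A' - A) (C - A) = (0 : ℝ))
    (hC'mem : C' ∈ affineSpan ℝ ({midpoint ℝ A B, midpoint ℝ B C} : Set Plane))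
    (hC'perp : inner ℝ (C' - C) (C - A) = (0 : ℝ)) :
    C' - C = A' - A ∧
      volume (convexHull ℝ ({A, A', C', C} : Set Plane)) =
        volume (convexHull ℝ ({A, B, C} : Set Plane)) := by
  set a : Plane := C - A with ha
  set u : Plane := B - B₁ with hu
  set v : Plane := (2:ℝ)⁻¹ • u with hv
  set X : Plane := midpoint ℝ A B with hX
  set Y : Plane := midpoint ℝ B C with hY
  -- B₁ = t • a + A
  obtain ⟨t, ht⟩ : ∃ t : ℝ, t • (C -ᵥ A) = B₁ -ᵥ A := by
    apply vadd_left_mem_affineSpan_pair.mp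
    simpa using hB₁mem
  rw [vsub_eq_sub, vsub_eq_sub, ← ha] at ht
  have hXA : X = (2:ℝ)⁻¹ • (A + B) := by
    rw [hX, midpoint_eq_smul_add]; norm_num
  have hYX : Y -ᵥ X = (2:ℝ)⁻¹ • a := by
    rw [hY, hX, vsub_eq_sub, midpoint_eq_smul_add, midpoint_eq_smul_add, ha]
    have : (⅟2 : ℝ) = (2:ℝ)⁻¹ := by norm_num
    rw [this]; module
  have hBeq : B = u + (t • a + A) := by rw [hu, ht]; module
  have hinner_va : inner ℝ v a = (0:ℝ) := by
    rw [hv, real_inner_smul_left, hu, ha, hB₁perp, mul_zero]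
  -- A' - A = v
  obtain ⟨s, hs⟩ : ∃ s : ℝ, s • (Y -ᵥ X) = A' -ᵥ X := by
    apply vadd_left_mem_affineSpan_pair.mp
    simpa [← hX, ← hY] using hA'mem
  have hA'v : A' - A = v := by
    apply perp_cancel ((s + t) * 2⁻¹) _ hinner_va hA'perp
    rw [hYX, vsub_eq_sub] at hs
    have hA'e : A' = s • ((2:ℝ)⁻¹ • a) + X := by rw [hs]; module
    rw [hA'e, hXA, hBeq, hv]; module
  obtain ⟨s', hs'⟩ : ∃ s' : ℝ, s' • (Y -ᵥ X) = C' -ᵥ X := by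
    apply vadd_left_mem_affineSpan_pair.mp
    simpa [← hX, ← hY] using hC'mem
  have hC'v : C' - C = v := by
    apply perp_cancel ((s' + t) * 2⁻¹ - 1) _ hinner_va hC'perp
    rw [hYX, vsub_eq_sub] at hs'
    have hC'e : C' = s' • ((2:ℝ)⁻¹ • a) + X := by rw [hs']; module
    have hC : C = a + A := by rw [ha]; module
    rw [hC'e, hXA, hBeq, hv, hC]; module
  refine ⟨hC'v.trans hA'v.symm, ?_⟩
  classical
  set bb := (EuclideanSpace.basisFun (Fin 2) ℝ).toBasis with hbb
  have hb0 : bb 0 = ee0 := by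
    simp only [hbb, OrthonormalBasis.coe_toBasis, EuclideanSpace.basisFun_apply]; rfl
  have hb1 : bb 1 = ee1 := by
    simp only [hbb, OrthonormalBasis.coe_toBasis, EuclideanSpace.basisFun_apply]; rfl
  set f : Plane →ₗ[ℝ] Plane := bb.constr ℝ ![a, v] with hf
  set g : Plane →ₗ[ℝ] Plane := bb.constr ℝ ![a, B - A] with hg
  set m : Plane →ₗ[ℝ] Plane := Matrix.toLin bb bb !![1, t; 0, 2] with hm
  have hf0 : f ee0 = a := by rw [hf, ← hb0, Module.Basis.constr_basis]; rfl
  have hf1 : f ee1 = v := by rw [hf, ← hb1, Module.Basis.constr_basis]; rfl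
  have hg0 : g ee0 = a := by rw [hg, ← hb0, Module.Basis.constr_basis]; rfl
  have hg1 : g ee1 = B - A := by rw [hg, ← hb1, Module.Basis.constr_basis]; rfl
  have hm0 : m ee0 = ee0 := by
    rw [hm, ← hb0, Matrix.toLin_self]
    rw [Fin.sum_univ_two, hb0, hb1]
    norm_num
  have hm1 : m ee1 = t • ee0 + (2:ℝ) • ee1 := by
    rw [hm, ← hb1, Matrix.toLin_self]
    rw [Fin.sum_univ_two, hb0, hb1]
    norm_num
  have hBA : B - A = t • a + (2:ℝ) • v := by rw [hBeq, hv]; module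
  have hgf : g = f ∘ₗ m := by
    apply bb.ext; intro i; fin_cases i
    · simp only [Fin.zero_eta, Fin.isValue, hb0, LinearMap.comp_apply, hg0, hm0, hf0]
    · simp only [Fin.mk_one, Fin.isValue, hb1, LinearMap.comp_apply, hg1, hm1, map_add,
        LinearMap.map_smul, hf0, hf1, hBA]
  have hdetm : LinearMap.det m = 2 := by
    rw [hm, LinearMap.det_toLin, Matrix.det_fin_two_of]; ring
  have hdetg : LinearMap.det g = LinearMap.det f * 2 := by
    rw [hgf, LinearMap.det_comp, hdetm]
  -- rectangle
  have hC : C = A + a := by rw [ha]; module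
  have hA'2 : A' = A + v := by rw [← hA'v]; module
  have hC'2 : C' = A + (a + v) := by
    have := hC'v; rw [hC] at this; rw [← this]; module
  have hrect : ({A, A', C', C} : Set Plane) = A +ᵥ (⇑f '' {0, ee1, ee0 + ee1, ee0}) := by
    rw [Set.image_insert_eq, Set.image_insert_eq, Set.image_insert_eq, Set.image_singleton,
      map_zero, map_add, hf0, hf1]
    rw [Set.vadd_set_insert, Set.vadd_set_insert, Set.vadd_set_insert, Set.vadd_set_singleton]
    rw [hA'2, hC'2, hC]
    simp only [vadd_eq_add, add_zero]
  have htri : ({A, B, C} : Set Plane) = A +ᵥ (⇑g '' {0, ee1, ee0}) := by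
    rw [Set.image_insert_eq, Set.image_insert_eq, Set.image_singleton, map_zero, hg1, hg0]
    rw [Set.vadd_set_insert, Set.vadd_set_insert, Set.vadd_set_singleton]
    simp only [vadd_eq_add, add_zero, add_sub_cancel]
    rw [hC]
  have hS4 : ({0, ee1, ee0 + ee1, ee0} : Set Plane) = {0, ee0, ee1, ee0 + ee1} := by
    ext x; simp only [Set.mem_insert_iff, Set.mem_singleton_iff]; tauto
  have hS3 : ({0, ee1, ee0} : Set Plane) = {0, ee0, ee1} := by
    ext x; simp only [Set.mem_insert_iff, Set.mem_singleton_iff]; tauto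
  rw [hrect, htri, convexHull_vadd, convexHull_vadd, measure_vadd, measure_vadd,
    ← LinearMap.image_convexHull, ← LinearMap.image_convexHull, hS4, hS3, hull_sq, hull_tri,
    Measure.addHaar_image_linearMap, Measure.addHaar_image_linearMap, vol_sq, vol_tri,
    hdetg, abs_mul]
  rw [ENNReal.ofReal_mul (abs_nonneg _)]
  have h2 : ENNReal.ofReal |(2:ℝ)| = 2 := by
    rw [abs_two]; exact ENNReal.ofReal_ofNat 2
  rw [h2, mul_one, mul_assoc,
    show (2 : ENNReal) * (1/2) = 1 by
      rw [one_div, ENNReal.mul_inv_cancel two_ne_zero ENNReal.ofNat_ne_top],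
    mul_one]
end
end

section
/- Let A, B, C be points in the plane with B not on line AC, and let B' = A + C - B (so that ABCB' is a parallelogram). If a point Z lies in the interior of triangle ACB', then the angle ∠(A, Z, C) is strictly larger than the angle ∠(A, B, C). -/
open EuclideanGeometry Real

noncomputable section

-- Exterior angle inequality: if Q is strictly between P and R, and X, P, Q are not
-- collinear, then the angle ∠ X Q R (exterior at Q) is larger than ∠ X P R.
lemma ext_angle_lt {X P Q R : Plane} (h : Sbtw ℝ P Q R)
    (hnc : ¬Collinear ℝ ({X, P, Q} : Set Plane)) : ∠ X P R < ∠ X Q R := by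
  have hPQR : ∠ P Q R = π := h.angle₁₂₃_eq_pi
  have hPX : P ≠ X := by
    rintro rfl
    apply hnc
    rw [show ({P, P, Q} : Set Plane) = {P, Q} from by ext x; simp]
    exact collinear_pair ℝ P Q
  have hQX : Q ≠ X := by
    rintro rfl
    apply hnc
    rw [show ({Q, P, Q} : Set Plane) = {P, Q} from by ext x; simp]
    exact collinear_pair ℝ P Q
  have hray : ∠ X P Q = ∠ X P R := angle_eq_angle_of_angle_eq_pi X hPQR
  have hsplit : ∠ X Q P + ∠ X Q R = π := angle_add_angle_eq_pi_of_angle_eq_pi X hPQR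
  have hsum : ∠ X P Q + ∠ P Q X + ∠ Q X P = π :=
    angle_add_angle_add_angle_eq_pi Q hPX
  have hpos : 0 < ∠ P X Q := by
    apply angle_pos_of_not_collinear
    intro hc
    apply hnc
    rwa [show ({P, X, Q} : Set Plane) = {X, P, Q} from Set.insert_comm _ _ _] at hc
  have h1 : ∠ P Q X = ∠ X Q P := angle_comm _ _ _
  have h2 : ∠ Q X P = ∠ P X Q := angle_comm _ _ _
  linarith

-- Splitting an angle at apex X by a point W strictly between A and C.
lemma angle_split {X A W C : Plane} (h : Sbtw ℝ A W C) (h1 : A ≠ X) (h2 : W ≠ X)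
    (h3 : C ≠ X) : ∠ A X W + ∠ W X C = ∠ A X C := by
  have hAWC : ∠ A W C = π := h.angle₁₂₃_eq_pi
  have hCWA : ∠ C W A = π := h.angle₃₂₁_eq_pi
  have r1 : ∠ X A W = ∠ X A C := angle_eq_angle_of_angle_eq_pi X hAWC
  have r2 : ∠ X C W = ∠ X C A := angle_eq_angle_of_angle_eq_pi X hCWA
  have r3 : ∠ X W A + ∠ X W C = π := angle_add_angle_eq_pi_of_angle_eq_pi X hAWC
  have S1 : ∠ X A W + ∠ A W X + ∠ W X A = π :=
    angle_add_angle_add_angle_eq_pi W h1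
  have S2 : ∠ X W C + ∠ W C X + ∠ C X W = π :=
    angle_add_angle_add_angle_eq_pi C h2
  have S3 : ∠ X A C + ∠ A C X + ∠ C X A = π :=
    angle_add_angle_add_angle_eq_pi C h1
  have c1 : ∠ A W X = ∠ X W A := angle_comm _ _ _
  have c2 : ∠ W C X = ∠ X C W := angle_comm _ _ _
  have c3 : ∠ A C X = ∠ X C A := angle_comm _ _ _
  have c4 : ∠ W X A = ∠ A X W := angle_comm _ _ _
  have c5 : ∠ C X W = ∠ W X C := angle_comm _ _ _
  have c6 : ∠ C X A = ∠ A X C := angle_comm _ _ _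
  linarith

theorem stmt_3 (A B C Z : Plane)
    (hB : B ∉ affineSpan ℝ ({A, C} : Set Plane))
    (hZ : Z ∈ interior (convexHull ℝ ({A, C, A + C - B} : Set Plane))) :
    ∠ A B C < ∠ A Z C := by
  set B' : Plane := A + C - B with hB'def
  -- the affine span of the three points is everything
  have htop : affineSpan ℝ ({A, C, B'} : Set Plane) = ⊤ :=
    affineSpan_eq_top_of_nonempty_interior ⟨Z, hZ⟩
  -- the three points are not collinear
  have hncol : ¬Collinear ℝ ({A, C, B'} : Set Plane) := by
    intro hc
    have hle : Module.finrank ℝ (vectorSpan ℝ ({A, C, B'} : Set Plane)) ≤ 1 :=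
      hc.finrank_le_one
    rw [← direction_affineSpan, htop, AffineSubspace.direction_top] at hle
    simp [finrank_top, finrank_euclideanSpace] at hle
  have hindep : AffineIndependent ℝ ![A, C, B'] :=
    affineIndependent_iff_not_collinear_set.2 hncol
  have hrange : Set.range ![A, C, B'] = ({A, C, B'} : Set Plane) := by
    ext x
    simp [Matrix.range_cons, Matrix.range_empty]
    tauto
  -- build the affine basis
  let b : AffineBasis (Fin 3) ℝ Plane := ⟨![A, C, B'], hindep, by rw [hrange]; exact htop⟩
  have hbcoe : ⇑b = ![A, C, B'] := rfl
  have hb0 : b 0 = A := rfl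
  have hb1 : b 1 = C := rfl
  have hb2 : b 2 = B' := rfl
  -- positive barycentric coordinates
  have hpos : ∀ i, 0 < b.coord i Z := by
    have h := b.interior_convexHull
    rw [hbcoe, hrange] at h
    rw [h] at hZ
    exact hZ
  set a := b.coord 0 Z with ha
  set c := b.coord 1 Z with hc
  set t := b.coord 2 Z with ht
  have hsum : a + c + t = 1 := by
    have := b.sum_coord_apply_eq_one Z
    rwa [Fin.sum_univ_three] at this
  have ha0 : 0 < a := hpos 0
  have hc0 : 0 < c := hpos 1
  have ht0 : 0 < t := hpos 2
  have hs0 : 0 < a + c := by linarith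
  have ht1 : t < 1 := by linarith
  -- Z as a linear combination
  have hZeq : Z = a • A + c • C + t • B' := by
    have h := b.affineCombination_coord_eq_self Z
    rw [Finset.affineCombination_eq_linear_combination _ _ _
        (by rw [Fin.sum_univ_three]; exact hsum)] at h
    rw [Fin.sum_univ_three] at h
    simp only [hb0, hb1, hb2] at h
    exact h.symm
  -- coordinate functions vanish on spans of pairs of basis points
  have coordvanish : ∀ (i j k : Fin 3), i ≠ j → i ≠ k →
      ∀ x ∈ affineSpan ℝ ({b j, b k} : Set Plane), b.coord i x = 0 := by
    intro i j k hij hik x hx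
    have hmem : b.coord i x ∈ (affineSpan ℝ ({b j, b k} : Set Plane)).map
        (b.coord i : Plane →ᵃ[ℝ] ℝ) := AffineSubspace.mem_map.2 ⟨x, hx, rfl⟩
    rw [AffineSubspace.map_span] at hmem
    have himg : (b.coord i : Plane →ᵃ[ℝ] ℝ) '' {b j, b k} = {0} := by
      rw [Set.image_pair, b.coord_apply_ne hij, b.coord_apply_ne hik]
      simp
    rw [himg] at hmem
    simpa using hmem
  -- basic distinctness
  have hAC : A ≠ C := by
    intro h
    apply hncol
    rw [h, show ({C, C, B'} : Set Plane) = {C, B'} from by ext x; simp]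
    exact collinear_pair ℝ C B'
  have hAB' : A ≠ B' := by
    intro h
    apply hncol
    rw [h, show ({B', C, B'} : Set Plane) = {C, B'} from by ext x; simp; all_goals tauto]
    exact collinear_pair ℝ C B'
  have hCB' : C ≠ B' := by
    intro h
    apply hncol
    rw [h, show ({A, B', B'} : Set Plane) = {A, B'} from by ext x; simp]
    exact collinear_pair ℝ A B'
  -- non-membership of Z in the edge lines
  have hZAC : Z ∉ affineSpan ℝ ({A, C} : Set Plane) := fun hmem => by
    have := coordvanish 2 0 1 (by decide) (by decide) Z (by rwa [hb0, hb1])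
    rw [← ht] at this; linarith
  have hZAB' : Z ∉ affineSpan ℝ ({A, B'} : Set Plane) := fun hmem => by
    have := coordvanish 1 0 2 (by decide) (by decide) Z (by rwa [hb0, hb2])
    rw [← hc] at this; linarith
  have hZCB' : Z ∉ affineSpan ℝ ({C, B'} : Set Plane) := fun hmem => by
    have := coordvanish 0 1 2 (by decide) (by decide) Z (by rwa [hb1, hb2])
    rw [← ha] at this; linarith
  have hZA : Z ≠ A := fun h => hZAC (h ▸ left_mem_affineSpan_pair ℝ A C)
  have hZC : Z ≠ C := fun h => hZAC (h ▸ right_mem_affineSpan_pair ℝ A C)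
  -- the point W on segment AC
  set W : Plane := AffineMap.lineMap A C (c / (a + c)) with hWdef
  have hWAC : W ∈ affineSpan ℝ ({A, C} : Set Plane) :=
    AffineMap.lineMap_mem_affineSpan_pair _ _ _
  have hB'AC : B' ∉ affineSpan ℝ ({A, C} : Set Plane) := by
    intro hmem
    apply hncol
    have := collinear_insert_of_mem_affineSpan_pair hmem
    rwa [show ({B', A, C} : Set Plane) = {A, C, B'} from by ext x; simp; tauto] at this
  have hWB' : W ≠ B' := fun h => hB'AC (h ▸ hWAC)
  have hsbtwAWC : Sbtw ℝ A W C := by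
    rw [hWdef]
    refine sbtw_lineMap_iff.2 ⟨hAC, ?_, ?_⟩
    · positivity
    · rw [div_lt_one hs0]; linarith
  have hZlineMap : Z = AffineMap.lineMap W B' t := by
    rw [AffineMap.lineMap_apply_module, hWdef, AffineMap.lineMap_apply_module, hZeq]
    have hacne : a + c ≠ 0 := ne_of_gt hs0
    have h1t : (1 : ℝ) - t = a + c := by linarith
    have hkey : (a + c) * (c / (a + c)) = c := by field_simp
    have e1 : (1 - t) * (1 - c / (a + c)) = a := by
      rw [h1t, mul_sub, mul_one, hkey]; ring
    have e2 : (1 - t) * (c / (a + c)) = c := by rw [h1t]; exact hkey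
    rw [smul_add, smul_smul, smul_smul, e1, e2]
  have hsbtwWZB : Sbtw ℝ W Z B' := by
    rw [hZlineMap]
    exact sbtw_lineMap_iff.2 ⟨hWB', ht0, ht1⟩
  have hZW : Z ≠ W := hsbtwWZB.ne_left
  have hWZ : W ≠ Z := hZW.symm
  -- non-collinearity hypotheses for the exterior angle lemma
  have hnc1 : ¬Collinear ℝ ({A, B', Z} : Set Plane) := by
    intro hcol
    exact hZAB' (hcol.mem_affineSpan_of_mem_of_ne (Set.mem_insert _ _)
      (by simp) (by simp) hAB')
  have hnc2 : ¬Collinear ℝ ({C, B', Z} : Set Plane) := by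
    intro hcol
    exact hZCB' (hcol.mem_affineSpan_of_mem_of_ne (Set.mem_insert _ _)
      (by simp) (by simp) hCB')
  -- exterior angle inequalities
  have e1 : ∠ A B' W < ∠ A Z W := ext_angle_lt hsbtwWZB.symm hnc1
  have e2 : ∠ C B' W < ∠ C Z W := ext_angle_lt hsbtwWZB.symm hnc2
  -- splitting the angles at Z and at B'
  have s1 : ∠ A Z W + ∠ W Z C = ∠ A Z C :=
    angle_split hsbtwAWC hZA.symm hWZ hZC.symm
  have s2 : ∠ A B' W + ∠ W B' C = ∠ A B' C :=
    angle_split hsbtwAWC hAB' hWB' hCB'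
  -- ∠ A B C = ∠ A B' C
  have hangleB : ∠ A B C = ∠ A B' C := by
    rw [EuclideanGeometry.angle, EuclideanGeometry.angle]
    have v1 : (A -ᵥ B' : Plane) = -(C -ᵥ B) := by
      simp only [hB'def, vsub_eq_sub]; abel
    have v2 : (C -ᵥ B' : Plane) = -(A -ᵥ B) := by
      simp only [hB'def, vsub_eq_sub]; abel
    rw [v1, v2, InnerProductGeometry.angle_neg_neg, InnerProductGeometry.angle_comm]
  have c7 : ∠ W Z C = ∠ C Z W := angle_comm _ _ _
  have c8 : ∠ W B' C = ∠ C B' W := angle_comm _ _ _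
  linarith
end
end

section
/- Let A, B, C be points in the plane with B not on line AC, let B₁ be the orthogonal projection of B onto line AC, and suppose C lies strictly between A and B₁. Let X be the midpoint of AB, Y the midpoint of BC, and Y' = 2X - Y. Then ACYY' is a parallelogram, and letting V be the midpoint of AY' and V₁ the projection of V onto line AC, we have dist(A, V₁) = (1/4)·dist(C, B₁). -/
open EuclideanGeometry

noncomputable section

theorem stmt_6 (A B C B₁ V₁ : Plane)
    (hB : B ∉ affineSpan ℝ ({A, C} : Set Plane))
    (hB₁mem : B₁ ∈ affineSpan ℝ ({A, C} : Set Plane))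
    (hB₁perp : inner ℝ (B - B₁) (C - A) = (0 : ℝ))
    (hbtw : Sbtw ℝ A C B₁)
    (hV₁mem : V₁ ∈ affineSpan ℝ ({A, C} : Set Plane))
    (hV₁perp :
      inner ℝ (midpoint ℝ A ((2 : ℝ) • midpoint ℝ A B - midpoint ℝ B C) - V₁) (C - A) = (0 : ℝ)) :
    (midpoint ℝ B C) - C = ((2 : ℝ) • midpoint ℝ A B - midpoint ℝ B C) - A ∧
      dist A V₁ = (1 / 4) * dist C B₁ := by
  have hAC : A ≠ C := hbtw.left_ne
  set d : Plane := C - A with hd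
  have hdne : d ≠ 0 := sub_ne_zero.mpr (Ne.symm hAC)
  have hdd : (inner ℝ d d : ℝ) ≠ 0 := fun h => hdne (inner_self_eq_zero.mp h)
  obtain ⟨t, ht⟩ : ∃ t : ℝ, B₁ - A = t • d := by
    have h2 := AffineSubspace.vsub_mem_direction hB₁mem (left_mem_affineSpan_pair ℝ A C)
    rw [direction_affineSpan, mem_vectorSpan_pair_rev] at h2
    obtain ⟨r, hr⟩ := h2
    exact ⟨r, by simpa [vsub_eq_sub] using hr.symm⟩
  obtain ⟨s, hs⟩ : ∃ s : ℝ, V₁ - A = s • d := by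
    have h2 := AffineSubspace.vsub_mem_direction hV₁mem (left_mem_affineSpan_pair ℝ A C)
    rw [direction_affineSpan, mem_vectorSpan_pair_rev] at h2
    obtain ⟨r, hr⟩ := h2
    exact ⟨r, by simpa [vsub_eq_sub] using hr.symm⟩
  have hBt : (inner ℝ (B - A) d : ℝ) = t * inner ℝ d d := by
    have hrew : B - B₁ = (B - A) - t • d := by rw [← ht]; abel
    rw [hrew, inner_sub_left, real_inner_smul_left, sub_eq_zero] at hB₁perp
    exact hB₁perp
  have hV : midpoint ℝ A ((2 : ℝ) • midpoint ℝ A B - midpoint ℝ B C) - A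
      = (1/4 : ℝ) • (B - C) := by
    simp only [midpoint_eq_smul_add, invOf_eq_inv]
    module
  have hst : s = (t - 1) / 4 := by
    have hrew : midpoint ℝ A ((2 : ℝ) • midpoint ℝ A B - midpoint ℝ B C) - V₁
        = (1/4 : ℝ) • (B - C) - s • d := by
      rw [← hV, ← hs]; abel
    rw [hrew, inner_sub_left, real_inner_smul_left, real_inner_smul_left, sub_eq_zero] at hV₁perp
    have hBC : (inner ℝ (B - C) d : ℝ) = (t - 1) * inner ℝ d d := by
      have : B - C = (B - A) - d := by rw [hd]; abel
      rw [this, inner_sub_left, hBt]; ring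
    rw [hBC] at hV₁perp
    have h3 : ((t - 1) / 4) * (inner ℝ d d : ℝ) = s * inner ℝ d d := by
      linear_combination hV₁perp
    exact (mul_right_cancel₀ hdd h3).symm
  constructor
  · simp only [midpoint_eq_smul_add, invOf_eq_inv]
    module
  · have h1 : dist A V₁ = |s| * ‖d‖ := by
      rw [dist_eq_norm, ← norm_neg, neg_sub, hs, norm_smul, Real.norm_eq_abs]
    have h2 : dist C B₁ = |1 - t| * ‖d‖ := by
      have : C - B₁ = (1 - t) • d := by
        rw [sub_smul, one_smul, ← ht, hd]; abel
      rw [dist_eq_norm, this, norm_smul, Real.norm_eq_abs]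
    rw [h1, h2, hst]
    rw [abs_div, abs_of_nonneg (by norm_num : (0:ℝ) ≤ 4), abs_sub_comm]
    ring
end
end

section
/- Let A, B, C be points in the plane forming a nondegenerate triangle, and let B₁ be the projection of B onto line AC with C strictly between A and B₁ and dist(C, B₁) ≤ 4·dist(A, C). With X the midpoint of AB, Y the midpoint of BC, Y' = 2X - Y, V the midpoint of AY', and W the midpoint of CY: the projection V₁ of V onto line AC lies on segment AC, and the projection W₂ of W onto line Y'Y lies on segment Y'Y. -/
open EuclideanGeometry

noncomputable section

theorem stmt_7 (A B C B₁ V₁ W₂ : Plane)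
    (hB : B ∉ affineSpan ℝ ({A, C} : Set Plane))
    (hB₁mem : B₁ ∈ affineSpan ℝ ({A, C} : Set Plane))
    (hB₁perp : inner ℝ (B - B₁) (C - A) = (0 : ℝ))
    (hbtw : Sbtw ℝ A C B₁)
    (hlen : dist C B₁ ≤ 4 * dist A C)
    -- abbreviations: X = midpoint A B, Y = midpoint B C, Y' = 2X - Y,
    -- V = midpoint A Y', W = midpoint C Y
    (hV₁mem : V₁ ∈ affineSpan ℝ ({A, C} : Set Plane))
    (hV₁perp :
      inner ℝ (midpoint ℝ A ((2 : ℝ) • midpoint ℝ A B - midpoint ℝ B C) - V₁) (C - A) = (0 : ℝ))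
    (hW₂mem : W₂ ∈ affineSpan ℝ
      ({(2 : ℝ) • midpoint ℝ A B - midpoint ℝ B C, midpoint ℝ B C} : Set Plane))
    (hW₂perp :
      inner ℝ (midpoint ℝ C (midpoint ℝ B C) - W₂)
        (midpoint ℝ B C - ((2 : ℝ) • midpoint ℝ A B - midpoint ℝ B C)) = (0 : ℝ)) :
    V₁ ∈ segment ℝ A C ∧
      W₂ ∈ segment ℝ ((2 : ℝ) • midpoint ℝ A B - midpoint ℝ B C) (midpoint ℝ B C) := by
  have hCA : C ≠ A := hbtw.ne_left
  have hv : C - A ≠ 0 := sub_ne_zero.mpr hCA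
  have hnv : 0 < ‖C - A‖ := norm_pos_iff.mpr hv
  have hd : 0 < (inner ℝ (C - A) (C - A) : ℝ) := by
    rw [real_inner_self_eq_norm_mul_norm]; exact mul_pos hnv hnv
  -- extract parameters
  have extract : ∀ P : Plane, P ∈ affineSpan ℝ ({A, C} : Set Plane) →
      ∃ r : ℝ, P = r • (C - A) + A := by
    intro P hP
    rw [show P = (P -ᵥ A) +ᵥ A from (vsub_vadd P A).symm] at hP
    obtain ⟨r, hr⟩ := vadd_left_mem_affineSpan_pair.mp hP
    simp only [vsub_eq_sub] at hr
    exact ⟨r, by rw [hr]; abel⟩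
  obtain ⟨t, ht⟩ := extract B₁ hB₁mem
  obtain ⟨s, hs⟩ := extract V₁ hV₁mem
  -- inner product of B - A with C - A
  have hBt : (inner ℝ (B - A) (C - A) : ℝ) = t * inner ℝ (C - A) (C - A) := by
    have h1 : B - B₁ = (B - A) - t • (C - A) := by rw [ht]; abel
    rw [h1, inner_sub_left, real_inner_smul_left] at hB₁perp
    linarith
  -- t > 1
  obtain ⟨r, hr01, hrm⟩ := hbtw.wbtw
  have hrt : r * t = 1 := by
    rw [AffineMap.lineMap_apply] at hrm
    simp only [vsub_eq_sub, vadd_eq_add] at hrm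
    have hv2 : (r * t) • (C - A) = C - A := by
      rw [ht] at hrm
      have h0 := eq_sub_of_add_eq hrm
      rw [add_sub_cancel_right] at h0
      rw [← smul_smul]
      exact h0
    have h2 : (r * t - 1) • (C - A) = 0 := by
      rw [sub_smul, one_smul, hv2, sub_self]
    rcases smul_eq_zero.mp h2 with h | h
    · linarith [sub_eq_zero.mp (sub_eq_zero.mpr (by linarith : r * t = 1))]
    · exact absurd h hv
  have hrpos : 0 < r := by
    rcases lt_or_eq_of_le hr01.1 with h | h
    · exact h
    · exfalso; rw [← h] at hrt; simp at hrt
  have htgt : 1 < t := by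
    have htne : t ≠ 1 := by
      intro h
      apply hbtw.ne_right
      rw [ht, h, one_smul]; abel
    have ht1 : 1 ≤ t := by nlinarith [hr01.2]
    exact lt_of_le_of_ne ht1 (Ne.symm htne)
  -- t ≤ 5
  have ht5 : t ≤ 5 := by
    have h1 : C - B₁ = (1 - t) • (C - A) := by rw [ht, sub_smul, one_smul]; abel
    have h2 : dist C B₁ = |1 - t| * ‖C - A‖ := by
      rw [dist_eq_norm, h1, norm_smul, Real.norm_eq_abs]
    have h3 : dist A C = ‖C - A‖ := by rw [dist_eq_norm, ← norm_neg]; congr 1; abel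
    rw [h2, h3] at hlen
    have h4 : |1 - t| ≤ 4 := le_of_mul_le_mul_right (by linarith) hnv
    linarith [(abs_le.mp h4).1]
  -- midpoint rewriting
  have hmid : ∀ x y : Plane, midpoint ℝ x y = (1/2 : ℝ) • x + (1/2 : ℝ) • y := by
    intro x y
    rw [midpoint_eq_smul_add, invOf_eq_inv, smul_add]
    norm_num
  -- V₁ coefficient
  have hsval : s = (t - 1) / 4 := by
    have h1 : midpoint ℝ A ((2 : ℝ) • midpoint ℝ A B - midpoint ℝ B C) - V₁ =
        (1/4 : ℝ) • (B - A) - ((1/4 : ℝ) + s) • (C - A) := by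
      rw [hs]
      simp only [hmid]
      module
    rw [h1, inner_sub_left, real_inner_smul_left, real_inner_smul_left, hBt] at hV₁perp
    have hfac : (s - (t - 1) / 4) * (inner ℝ (C - A) (C - A) : ℝ) = 0 := by
      linear_combination -hV₁perp
    rcases mul_eq_zero.mp hfac with h | h
    · linarith
    · exact absurd h (ne_of_gt hd)
  constructor
  · -- V₁ ∈ segment A C
    refine ⟨1 - s, s, by rw [hsval]; linarith, by rw [hsval]; linarith, by ring, ?_⟩
    rw [hs]
    module
  · -- W₂ part
    obtain ⟨u, hu⟩ : ∃ u : ℝ, W₂ =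
        u • (midpoint ℝ B C - ((2 : ℝ) • midpoint ℝ A B - midpoint ℝ B C))
        + ((2 : ℝ) • midpoint ℝ A B - midpoint ℝ B C) := by
      set Y' : Plane := (2 : ℝ) • midpoint ℝ A B - midpoint ℝ B C with hY'
      rw [show W₂ = (W₂ -ᵥ Y') +ᵥ Y' from (vsub_vadd W₂ Y').symm] at hW₂mem
      obtain ⟨u, hu⟩ := vadd_left_mem_affineSpan_pair.mp hW₂mem
      simp only [vsub_eq_sub] at hu
      exact ⟨u, by rw [hu]; abel⟩
    have hYY' : midpoint ℝ B C - ((2 : ℝ) • midpoint ℝ A B - midpoint ℝ B C) = C - A := by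
      simp only [hmid]
      module
    have huval : u = (5 - t) / 4 := by
      have h1 : midpoint ℝ C (midpoint ℝ B C) - W₂ =
          ((5/4 : ℝ) - u) • (C - A) - (1/4 : ℝ) • (B - A) := by
        rw [hu, hYY']
        simp only [hmid]
        module
      rw [hYY', h1, inner_sub_left, real_inner_smul_left, real_inner_smul_left, hBt] at hW₂perp
      have hfac : (u - (5 - t) / 4) * (inner ℝ (C - A) (C - A) : ℝ) = 0 := by
        linear_combination -hW₂perp
      rcases mul_eq_zero.mp hfac with h | h
      · linarith
      · exact absurd h (ne_of_gt hd)
    refine ⟨1 - u, u, by rw [huval]; linarith, by rw [huval]; linarith, by ring, ?_⟩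
    rw [hu]
    simp only [hmid]
    module
end
end
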